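/- Let n > 3 be an odd integer and let m be an integer with 1 < m < n, gcd(m, n) = 1 and gcd(m − 1, n) = 1. Then L_n(m) is a weak inverse property (WIP) loop if and only if m² − m + 1 ≡ 0 (mod n). -/

import Mathlib

/-- The loop `L_n(m)`: carrier `{e} ∪ {1, …, n}`, modeled as `Option (ZMod n)`
with `none` playing the role of the identity `e` and the nonidentity elements
`{1, …, n}` identified with their residues in `ZMod n`.  For distinct nonidentity
`i, j` the product is `m·j − (m−1)·i (mod n)`. -/
def lmul (n m : ℕ) : Option (ZMod n) → Option (ZMod n) → Option (ZMod n)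
  | none, x => x
  | some i, none => some i
  | some i, some j =>
      if i = j then none
      else some ((m : ZMod n) * j - ((m : ZMod n) - 1) * i)

lemma lmul_none_right (n m : ℕ) : ∀ w, lmul n m w none = w
  | none => rfl
  | some _ => rfl

/-- For odd `n > 3` and admissible `m`, the loop `L_n(m)` is a weak inverse
property (WIP) loop — i.e. `(x*y)*z = e` implies `x*(y*z) = e` — if and only if
`m² − m + 1 ≡ 0 (mod n)`. -/
theorem stmt9 (n m : ℕ) (hn : 3 < n) (hodd : Odd n) (hm1 : 1 < m) (hm2 : m < n)
    (hg1 : Nat.gcd m n = 1) (hg2 : Nat.gcd (m - 1) n = 1) :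
    (∀ x y z : Option (ZMod n),
        lmul n m (lmul n m x y) z = none → lmul n m x (lmul n m y z) = none) ↔
      n ∣ (m ^ 2 - m + 1) := by
  haveI : NeZero n := ⟨by omega⟩
  haveI : Fact (1 < n) := ⟨by omega⟩
  set A : ZMod n := (m : ZMod n) with hA
  have hcast : ((m ^ 2 - m + 1 : ℕ) : ZMod n) = A ^ 2 - A + 1 := by
    have h1 : m ≤ m ^ 2 := Nat.le_self_pow (by norm_num) m
    push_cast [Nat.cast_sub h1]
    ring
  constructor
  · intro hwip
    have hA1 : (1 : ZMod n) ≠ A := by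
      intro h
      have h0 : ((m - 1 : ℕ) : ZMod n) = 0 := by
        push_cast [Nat.cast_sub (le_of_lt hm1)]
        rw [← hA, ← h]; ring
      rw [ZMod.natCast_eq_zero_iff] at h0
      have := Nat.le_of_dvd (by omega) h0
      omega
    have h01 : (0 : ZMod n) ≠ 1 := zero_ne_one
    have e1 : lmul n m (some 0) (some 1) = some A := by
      simp [lmul, h01]
      rw [hA]
    have hhyp : lmul n m (lmul n m (some 0) (some 1)) (some A) = none := by
      rw [e1]; simp [lmul]
    have key := hwip _ _ _ hhyp
    have e2 : lmul n m (some 1) (some A) = some (A * A - (A - 1)) := by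
      simp [lmul, hA1]
      rw [hA]
    rw [e2] at key
    simp only [lmul] at key
    split at key
    · rename_i h
      have hz : ((m ^ 2 - m + 1 : ℕ) : ZMod n) = 0 := by
        rw [hcast]; linear_combination -h
      exact (ZMod.natCast_eq_zero_iff _ _).mp hz
    · exact absurd key (by simp)
  · intro hdvd x y z hxyz
    have key : A ^ 2 - A + 1 = 0 := by
      rw [← hcast]
      exact (ZMod.natCast_eq_zero_iff _ _).mpr hdvd
    have hb : (A - 1) * (-A) = 1 := by linear_combination -key
    match x, y, z with
    | none, y, z => simpa [lmul] using hxyz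
    | some i, none, z => simpa [lmul] using hxyz
    | some i, some j, none =>
      rw [lmul_none_right] at hxyz
      rw [lmul_none_right]
      exact hxyz
    | some i, some j, some k =>
      by_cases hij : i = j
      · subst hij
        simp [lmul] at hxyz
      · simp only [lmul, if_neg hij] at hxyz
        by_cases hpk : A * j - (A - 1) * i = k
        · have hjk : j ≠ k := by
            intro hjk
            have h : (A - 1) * i = (A - 1) * j := by
              rw [hjk] at hpk ⊢
              linear_combination -hpk
            exact hij (by linear_combination (-A) * h + (j - i) * hb)
          have hval : A * k - (A - 1) * j = i := by
            rw [← hpk]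
            linear_combination (j - i) * key
          have e3 : lmul n m (some j) (some k) = some i := by
            simp [lmul, hjk, hval]
            exact hval
          rw [e3]
          simp [lmul]
        · rw [if_neg hpk] at hxyz
          exact absurd hxyz (by simp)
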